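/- Let Θ ⊂ ℝ be a finite nonempty set with 0 < |θ̄| < π for every θ̄ ∈ Θ, θ̄_M = max_{θ̄∈Θ} |θ̄|, and assume 0 < γ_θ < 4·r_o·‖p_d − p_o‖/π². Set δ* = (2·r_o·‖p_d − p_o‖/π² − γ_θ/2)·θ̄_M², c_κ = (1 − cos θ̄_M)·‖p_d − p_o‖², and let 0 < γ_s < δ*/c_κ. Define σ(θ) = (I₂ − R(θ))ᵀ(p_o − p_d) and V_s(p,η,θ) = 𝒱_nav(p,θ) + (γ_s/2)‖η − σ(θ)‖². Then for every p ∈ X_p with p ≠ p_d that is a critical point of V_nav (i.e. p − p_d + ϱ·φ'(d_o(p))·(p − p_o)/‖p − p_o‖ = 0), one has V_s(p,0,0) − min_{θ̄∈Θ} V_s(p,0,θ̄) > δ* − γ_s·c_κ > 0. -/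

import Mathlib

open Real Filter
open scoped RealInnerProductSpace Topology Matrix

noncomputable section

/-- The Euclidean plane. -/
abbrev E2 : Type := EuclideanSpace ℝ (Fin 2)

/-- The planar rotation matrix `R(θ)`. -/
def RotM (θ : ℝ) : Matrix (Fin 2) (Fin 2) ℝ :=
  !![Real.cos θ, -Real.sin θ; Real.sin θ, Real.cos θ]

/-- The matrix `Δ = [[0,-1],[1,0]]`. -/
def DeltaM : Matrix (Fin 2) (Fin 2) ℝ := !![0, -1; 1, 0]

/-- Reinterpret a plain vector as a point of the Euclidean plane. -/
def toE2 (v : Fin 2 → ℝ) : E2 := (WithLp.equiv 2 (Fin 2 → ℝ)).symm v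

/-- Reinterpret a point of the Euclidean plane as a plain vector. -/
def fromE2 (p : E2) : Fin 2 → ℝ := WithLp.equiv 2 (Fin 2 → ℝ) p

/-- A `2×2` matrix acting on a point of the Euclidean plane. -/
def mulV (M : Matrix (Fin 2) (Fin 2) ℝ) (p : E2) : E2 := toE2 (M.mulVec (fromE2 p))

/-- The barrier function `φ`. -/
def phi (rs z : ℝ) : ℝ := if z ≤ rs then (z - rs) ^ 2 * Real.log (rs / z) else 0

/-- The derivative `φ'` of the barrier function. -/
def phi' (rs z : ℝ) : ℝ :=
  if z ≤ rs then 2 * (z - rs) * Real.log (rs / z) - (z - rs) ^ 2 / z else 0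

/-- Distance to the obstacle, `d_o(p) = ‖p - p_o‖ - r_o`. -/
def dO (po : E2) (ro : ℝ) (p : E2) : ℝ := ‖p - po‖ - ro

/-- The free space `X_p = {p : ‖p - p_o‖ ≥ r_o + ε}`. -/
def Xp (po : E2) (ro ε : ℝ) : Set E2 := {p | ro + ε ≤ ‖p - po‖}

/-- The navigation function `V_nav`. -/
def Vnav (po pd : E2) (ro ϱ rs : ℝ) (p : E2) : ℝ :=
  (1 / 2) * ‖p - pd‖ ^ 2 + ϱ * phi rs (dO po ro p)

/-- The gradient `∇V_nav(p) = p - p_d + ϱ φ'(d_o(p)) (p - p_o)/‖p - p_o‖`. -/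
def gradVnav (po pd : E2) (ro ϱ rs : ℝ) (p : E2) : E2 :=
  (p - pd) + ((ϱ * phi' rs (dO po ro p)) / ‖p - po‖) • (p - po)

/-- The transformation `T(p,θ) = p_o + R(θ)(p - p_o)`. -/
def Tmap (po : E2) (p : E2) (θ : ℝ) : E2 := po + mulV (RotM θ) (p - po)

/-- The modified navigation function `𝒱_nav`. -/
def Vnav2 (po pd : E2) (ro ϱ rs γθ : ℝ) (p : E2) (θ : ℝ) : ℝ :=
  (1 / 2) * ‖Tmap po p θ - pd‖ ^ 2 + ϱ * phi rs (dO po ro p) + (γθ / 2) * θ ^ 2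

/-- The map `σ(θ) = (I₂ - R(θ))ᵀ (p_o - p_d)`. -/
def sigmaFn (po pd : E2) (θ : ℝ) : E2 := mulV ((1 - RotM θ)ᵀ) (po - pd)

lemma normsq_E2 (x : E2) : ‖x‖^2 = x 0^2 + x 1^2 := by
  rw [EuclideanSpace.norm_eq, Real.sq_sqrt (by positivity)]
  simp [Fin.sum_univ_two, sq_abs]

lemma mulV_apply (M : Matrix (Fin 2) (Fin 2) ℝ) (x : E2) (i : Fin 2) :
    mulV M x i = M i 0 * x 0 + M i 1 * x 1 := by
  simp [mulV, toE2, fromE2, Matrix.mulVec, dotProduct, Fin.sum_univ_two]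
  fin_cases i <;> simp

lemma jordan {x : ℝ} (h0 : 0 ≤ x) (hpi : x ≤ π) : 2 * x^2 / π^2 ≤ 1 - Real.cos x := by
  have hππ : 0 < π := Real.pi_pos
  have hs : 2/π * (x/2) ≤ Real.sin (x/2) := Real.mul_le_sin (by linarith) (by linarith)
  have hcos : Real.cos x = 1 - 2 * Real.sin (x/2)^2 := by
    have h2 : Real.cos (2*(x/2)) = 1 - 2*Real.sin (x/2)^2 := by
      rw [Real.cos_two_mul', Real.cos_sq']; ring
    rw [← h2]; congr 1; ring
  have h0' : 0 ≤ 2/π * (x/2) := by positivity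
  have hsq : (2/π * (x/2))^2 ≤ Real.sin (x/2)^2 := by nlinarith
  rw [hcos]
  have h3 : (2/π * (x/2))^2 = x^2/π^2 := by field_simp
  rw [h3] at hsq
  have h4 : 2*x^2/π^2 = 2*(x^2/π^2) := by ring
  linarith


set_option maxHeartbeats 1600000 in
/-- With `δ* = (2 r_o ‖p_d - p_o‖/π² - γ_θ/2) θ̄_M²`,
`c_κ = (1 - cos θ̄_M) ‖p_d - p_o‖²`, and `0 < γ_s < δ*/c_κ`, for every undesired critical point
`p ≠ p_d` of `V_nav` in `X_p` one has
`V_s(p,0,0) - min_{θ̄∈Θ} V_s(p,0,θ̄) > δ* - γ_s c_κ > 0`, where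
`V_s(p,η,θ) = 𝒱_nav(p,θ) + (γ_s/2)‖η - σ(θ)‖²`. -/
theorem statement_7
    (po pd : E2) (ro ε ϱ rs γθ γs : ℝ)
    (hro : 0 < ro) (hε : 0 < ε) (hϱ : 0 < ϱ)
    (hpd : pd ∈ Xp po ro ε) (hrs_lb : ε < rs) (hrs_ub : rs < dO po ro pd)
    (Θ : Finset ℝ) (hne : Θ.Nonempty) (hΘ : ∀ t ∈ Θ, 0 < |t| ∧ |t| < π)
    (hγθ₀ : 0 < γθ) (hγθ : γθ < 4 * ro * ‖pd - po‖ / π ^ 2)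
    (θM δstar cκ : ℝ)
    (hθM : θM = Θ.sup' hne fun t => |t|)
    (hδ : δstar = (2 * ro * ‖pd - po‖ / π ^ 2 - γθ / 2) * θM ^ 2)
    (hc : cκ = (1 - Real.cos θM) * ‖pd - po‖ ^ 2)
    (hγs₀ : 0 < γs) (hγs : γs < δstar / cκ)
    (p : E2) (hp : p ∈ Xp po ro ε) (hppd : p ≠ pd)
    (hcrit : p - pd + ((ϱ * phi' rs (dO po ro p)) / ‖p - po‖) • (p - po) = 0) :
    δstar - γs * cκ <
      (Vnav2 po pd ro ϱ rs γθ p 0 + (γs / 2) * ‖(0 : E2) - sigmaFn po pd 0‖ ^ 2)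
        - Θ.inf' hne
            (fun t => Vnav2 po pd ro ϱ rs γθ p t + (γs / 2) * ‖(0 : E2) - sigmaFn po pd t‖ ^ 2)
      ∧ 0 < δstar - γs * cκ := by
  have hpi : (0:ℝ) < π := Real.pi_pos
  have hn_lb : ro + ε ≤ ‖p - po‖ := hp
  have hn0 : (0:ℝ) < ‖p - po‖ := by linarith
  set n : ℝ := ‖p - po‖ with hn_def
  set z : ℝ := dO po ro p with hz_def
  have hz_eq : z = n - ro := rfl
  have hz_pos : 0 < z := by rw [hz_eq]; linarith
  set lam : ℝ := (ϱ * phi' rs (dO po ro p)) / ‖p - po‖ with hlam_def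
  -- φ' ≠ 0
  have hφne : phi' rs z ≠ 0 := by
    intro h0
    apply hppd
    have hl0 : lam = 0 := by rw [hlam_def, ← hz_def, h0]; simp
    have h := hcrit
    rw [hl0, zero_smul, add_zero, sub_eq_zero] at h
    exact h
  have hz_le : z ≤ rs := by
    by_contra h
    exact hφne (if_neg h)
  have hz_lt : z < rs := by
    rcases lt_or_eq_of_le hz_le with h | h
    · exact h
    · exfalso; apply hφne; rw [phi', if_pos hz_le, h]; simp
  have hφneg : phi' rs z < 0 := by
    rw [phi', if_pos hz_le]
    have hlog : 0 < Real.log (rs/z) := Real.log_pos ((one_lt_div hz_pos).mpr hz_lt)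
    have h1 : 2*(z-rs)*Real.log (rs/z) < 0 := by nlinarith
    have h2 : 0 < (z-rs)^2/z := div_pos (by nlinarith) hz_pos
    linarith
  have hlam_neg : lam < 0 := by
    rw [hlam_def, ← hz_def]
    exact div_neg_of_neg_of_pos (mul_neg_of_pos_of_neg hϱ hφneg) hn0
  set c : ℝ := 1 + lam with hc_def
  have hv : pd - po = c • (p - po) := by
    have h2 : p - pd = -(lam • (p - po)) := by
      have h := hcrit
      rwa [add_eq_zero_iff_eq_neg] at h
    have h3 : pd - po = (p - po) - (p - pd) := by abel
    rw [h3, h2, hc_def]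
    module
  have hnv : ‖pd - po‖ = |c| * n := by
    rw [hv, norm_smul, Real.norm_eq_abs, hn_def]
  have hvlower : ro + rs < |c| * n := by
    rw [← hnv]
    have := hrs_ub
    rw [dO] at this
    linarith
  have hnup : n < ro + rs := by
    rw [hz_eq] at hz_lt; linarith
  have hcneg : c < -1 := by
    have hc1 : c < 1 := by rw [hc_def]; linarith
    have habs : 1 < |c| := by
      have h5 : 1 * n < |c| * n := by rw [one_mul]; linarith
      exact lt_of_mul_lt_mul_right h5 hn0.le
    rcases abs_cases c with ⟨h1, h2⟩ | ⟨h1, h2⟩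
    · linarith
    · linarith
  have hnv' : ‖pd - po‖ = -c * n := by
    rw [hnv, abs_of_neg (by linarith : c < 0)]
    try ring
  -- θ* achieving the max
  obtain ⟨t0, ht0mem, ht0⟩ := Θ.exists_mem_eq_sup' hne (fun t => |t|)
  have hθM_eq : θM = |t0| := by rw [hθM, ht0]
  obtain ⟨ht0pos, ht0pi⟩ := hΘ t0 ht0mem
  have hθM0 : 0 < θM := hθM_eq ▸ ht0pos
  have hθMπ : θM < π := hθM_eq ▸ ht0pi
  have hct : Real.cos t0 = Real.cos θM := by rw [hθM_eq, Real.cos_abs]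
  have hts : t0^2 = θM^2 := by rw [hθM_eq, sq_abs]
  -- Coordinates
  set u0 : ℝ := (p - po) 0 with hu0
  set u1 : ℝ := (p - po) 1 with hu1
  have hn2 : u0^2 + u1^2 = n^2 := (normsq_E2 (p - po)).symm
  have hpd2 : p - pd = (1 - c) • (p - po) := by
    have h3 : p - pd = (p - po) - (pd - po) := by abel
    rw [h3, hv]; module
  have hpo_pd : po - pd = (-c) • (p - po) := by
    have h3 : po - pd = -(pd - po) := by abel
    rw [h3, hv]; module
  have hQ : ‖p - pd‖^2 = (1 - c)^2 * n^2 := by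
    rw [hpd2, norm_smul, mul_pow, Real.norm_eq_abs, sq_abs, hn_def]
  -- general θ formulas
  have hdiff : ∀ θ : ℝ, ‖p - pd‖^2 - ‖Tmap po p θ - pd‖^2
      = 2*(-c)*(1 - Real.cos θ)*n^2 := by
    intro θ
    have hT : Tmap po p θ - pd = mulV (RotM θ) (p - po) - c • (p - po) := by
      have h1 : Tmap po p θ - pd = mulV (RotM θ) (p - po) - (pd - po) := by
        rw [Tmap]; abel
      rw [h1, hv]
    have hP : ‖Tmap po p θ - pd‖^2
        = (Real.cos θ * u0 - Real.sin θ * u1 - c*u0)^2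
          + (Real.sin θ * u0 + Real.cos θ * u1 - c*u1)^2 := by
      rw [hT, normsq_E2]
      simp [mulV_apply, RotM, hu0, hu1]
      try ring
    rw [hQ, hP, ← hn2]
    linear_combination (-(u0^2+u1^2)) * (Real.sin_sq_add_cos_sq θ)
  have hS : ∀ θ : ℝ, ‖(0:E2) - sigmaFn po pd θ‖^2
      = 2*c^2*(1 - Real.cos θ)*n^2 := by
    intro θ
    have hσ : sigmaFn po pd θ = mulV ((1 - RotM θ)ᵀ) ((-c) • (p - po)) := by
      rw [sigmaFn, hpo_pd]
    have hM : (1 - RotM θ)ᵀ = !![1 - Real.cos θ, -Real.sin θ; Real.sin θ, 1 - Real.cos θ] := by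
      rw [RotM, Matrix.one_fin_two]
      ext i j
      fin_cases i <;> fin_cases j <;> simp
    have hS' : ‖(0:E2) - sigmaFn po pd θ‖^2
        = ((1 - Real.cos θ) * (-c*u0) + (-Real.sin θ) * (-c*u1))^2
          + (Real.sin θ * (-c*u0) + (1 - Real.cos θ) * (-c*u1))^2 := by
      rw [zero_sub, norm_neg, hσ, hM, normsq_E2]
      simp [mulV_apply, hu0, hu1]
      try ring
    rw [hS', ← hn2]
    linear_combination (c^2*(u0^2+u1^2)) * (Real.sin_sq_add_cos_sq θ)
  -- values at 0 and t0
  set f : ℝ → ℝ := fun t =>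
    Vnav2 po pd ro ϱ rs γθ p t + (γs / 2) * ‖(0 : E2) - sigmaFn po pd t‖ ^ 2 with hf
  have hf_eq : ∀ θ, f θ = (1/2) * ‖Tmap po p θ - pd‖^2 + ϱ * phi rs (dO po ro p)
      + (γθ/2)*θ^2 + (γs/2) * ‖(0:E2) - sigmaFn po pd θ‖^2 := by
    intro θ; rw [hf]; rfl
  have hinf : Θ.inf' hne f ≤ f t0 := Finset.inf'_le _ ht0mem
  -- cκ value
  have hcκ : cκ = (1 - Real.cos θM) * (c^2 * n^2) := by
    rw [hc, hnv']; ring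
  have hcos1 : Real.cos θM < 1 := by
    have := Real.cos_lt_cos_of_nonneg_of_le_pi (le_refl 0) hθMπ.le hθM0
    simpa using this
  have hj : 2*θM^2/π^2 ≤ 1 - Real.cos θM := jordan hθM0.le hθMπ.le
  have hA : 2*ro*θM^2/π^2 < n * (1 - Real.cos θM) := by
    have h1 : ro*(2*θM^2/π^2) ≤ ro*(1 - Real.cos θM) :=
      mul_le_mul_of_nonneg_left hj hro.le
    have h2 : ro*(1 - Real.cos θM) < n*(1 - Real.cos θM) :=
      mul_lt_mul_of_pos_right (by linarith) (by linarith)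
    have h3 : 2*ro*θM^2/π^2 = ro*(2*θM^2/π^2) := by ring
    linarith
  have hval : f 0 - f t0 = (-c)*(1 - Real.cos θM)*n^2 - (γθ/2)*θM^2
      - (γs/2)*(2*c^2*(1 - Real.cos θM)*n^2) := by
    have e0d := hdiff 0
    have e0s := hS 0
    simp only [Real.cos_zero] at e0d e0s
    have etd := hdiff t0
    have ets := hS t0
    rw [hct] at etd ets
    rw [hf_eq 0, hf_eq t0]
    linear_combination (1/2)*etd - (1/2)*e0d + (γs/2)*e0s - (γs/2)*ets - (γθ/2)*hts
  have hkey : δstar - γs * cκ < f 0 - f t0 := by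
    have hmc : 0 < -c * n := mul_pos (by linarith) hn0
    have hmain : (-c)*n * (2*ro*θM^2/π^2) < (-c)*n * (n*(1 - Real.cos θM)) :=
      mul_lt_mul_of_pos_left hA hmc
    have hπ2 : (0:ℝ) < π^2 := by positivity
    rw [hval, hδ, hnv', hcκ]
    clear_value n z lam c
    have hmain' : 2 * ro * (-c * n) / π ^ 2 * θM ^ 2 < -c * (1 - Real.cos θM) * n ^ 2 := by
      calc 2 * ro * (-c * n) / π ^ 2 * θM ^ 2
          = -c * n * (2 * ro * θM ^ 2 / π ^ 2) := by ring
        _ < -c * n * (n * (1 - Real.cos θM)) := hmain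
        _ = -c * (1 - Real.cos θM) * n ^ 2 := by ring
    have hγeq : γs * ((1 - Real.cos θM) * (c ^ 2 * n ^ 2))
        = γs / 2 * (2 * c ^ 2 * (1 - Real.cos θM) * n ^ 2) := by ring
    have hexp : (2 * ro * (-c * n) / π ^ 2 - γθ / 2) * θM ^ 2
        = 2 * ro * (-c * n) / π ^ 2 * θM ^ 2 - γθ / 2 * θM ^ 2 := by ring
    linarith [hmain', hγeq, hexp]
  have hcκpos : 0 < cκ := by
    rw [hcκ]
    have h1 : 0 < c^2 * n^2 := by
      have h2 : c^2*n^2 = (-c*n)*(-c*n) := by ring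
      rw [h2]
      exact mul_pos (mul_pos (by linarith) hn0) (mul_pos (by linarith) hn0)
    exact mul_pos (by linarith) h1
  have hpos : 0 < δstar - γs * cκ := by
    have := (lt_div_iff₀ hcκpos).mp hγs
    linarith
  refine ⟨?_, hpos⟩
  calc δstar - γs * cκ < f 0 - f t0 := hkey
    _ ≤ f 0 - Θ.inf' hne f := by linarith
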